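/- Let (β_i)_{i≥1} be independent and identically distributed random variables taking values in {−1, 0, 1, 2, …}. For a positive integer s, let W_t = s + ∑_{i=1}^t β_i and let τ = inf{ t : W_t = 0 } be the first hitting time of 0. Then for every positive integer t, P(τ = t) ≤ (s/t) · P(W_t = 0). -/

import Mathlib

open MeasureTheory ProbabilityTheory
open Fin.NatCast

namespace SpitzerAux

variable {t s : ℕ} {w : ℕ → ℤ}

/-- One-period sum is shift invariant for a periodic sequence. -/
lemma sum_period_shift (hper : ∀ n, w (n + t) = w n) (k : ℕ) :
    ∑ i ∈ Finset.range t, w (k + i) = ∑ i ∈ Finset.range t, w i := by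
  induction k with
  | zero => simp
  | succ k ih =>
    have h1 := Finset.sum_range_succ' (fun i => w (k + i)) t
    have h2 := Finset.sum_range_succ (fun i => w (k + i)) t
    have h3 : w (k + t) = w k := hper k
    have h4 : ∀ i ∈ Finset.range t, w (k + (i + 1)) = w (k + 1 + i) := by
      intro i _; ring_nf
    rw [Finset.sum_congr rfl h4] at h1
    simp only [Nat.add_zero] at h1 h2
    have : ∑ i ∈ Finset.range t, w (k + 1 + i) = ∑ i ∈ Finset.range t, w (k + i) := by
      omega
    rw [this, ih]

lemma psum_shift (hper : ∀ n, w (n + t) = w n)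
    (hsum : (s : ℤ) + ∑ i ∈ Finset.range t, w i = 0) (n : ℕ) :
    ∑ i ∈ Finset.range (n + t), w i = (∑ i ∈ Finset.range n, w i) - s := by
  rw [Finset.sum_range_add]
  rw [sum_period_shift hper n]
  omega

/-- Positivity from avoidance for skip-free walks. -/
lemma pos_of_ne (hb : ∀ n, -1 ≤ w n) (hs : 0 < s) {k : ℕ}
    (hk : ∀ u < t, (s : ℤ) + ∑ i ∈ Finset.range u, w (k + i) ≠ 0) :
    ∀ u < t, 0 < (s : ℤ) + ∑ i ∈ Finset.range u, w (k + i) := by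
  intro u hu
  induction u with
  | zero => simpa using hs
  | succ u ih =>
    have h1 : 0 < (s : ℤ) + ∑ i ∈ Finset.range u, w (k + i) := ih (by omega)
    have h2 := Finset.sum_range_succ (fun i => w (k + i)) u
    have h3 := hb (k + u)
    have h4 := hk (u + 1) hu
    omega

/-- A good rotation start corresponds to a strict running minimum at `k + t`. -/
lemma newmin (hper : ∀ n, w (n + t) = w n) (hb : ∀ n, -1 ≤ w n) (hs : 0 < s)
    (hsum : (s : ℤ) + ∑ i ∈ Finset.range t, w i = 0) {k : ℕ} (hkt : k < t)
    (hk : ∀ u < t, (s : ℤ) + ∑ i ∈ Finset.range u, w (k + i) ≠ 0) :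
    ∀ j < k + t, ∑ i ∈ Finset.range (k + t), w i < ∑ i ∈ Finset.range j, w i := by
  have hSkt : ∑ i ∈ Finset.range (k + t), w i = (∑ i ∈ Finset.range k, w i) - s :=
    psum_shift hper hsum k
  have hmain : ∀ u < t, ∑ i ∈ Finset.range (k + t), w i < ∑ i ∈ Finset.range (k + u), w i := by
    intro u hu
    have h1 := pos_of_ne hb hs hk u hu
    have h2 : ∑ i ∈ Finset.range (k + u), w i
        = (∑ i ∈ Finset.range k, w i) + ∑ i ∈ Finset.range u, w (k + i) := by
      rw [Finset.sum_range_add]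
    omega
  intro j hj
  rcases le_or_gt k j with h | h
  · obtain ⟨u, rfl⟩ := Nat.exists_eq_add_of_le h
    exact hmain u (by omega)
  · have hj2 : ∑ i ∈ Finset.range (j + t), w i = (∑ i ∈ Finset.range j, w i) - s :=
      psum_shift hper hsum j
    have : j + t = k + (t - (k - j)) := by omega
    have h5 := hmain (t - (k - j)) (by omega)
    rw [← this] at h5
    omega

/-- The cycle lemma, upper-bound direction: at most `s` of the `t` cyclic rotations
avoid hitting zero before time `t`. -/
lemma cycle_card_le (hper : ∀ n, w (n + t) = w n) (hb : ∀ n, -1 ≤ w n)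
    (hs : 0 < s) (ht : 0 < t)
    (hsum : (s : ℤ) + ∑ i ∈ Finset.range t, w i = 0) :
    ((Finset.range t).filter
      (fun k => ∀ u < t, (s : ℤ) + ∑ i ∈ Finset.range u, w (k + i) ≠ 0)).card ≤ s := by
  classical
  have hne : ((Finset.range t).image (fun n => ∑ i ∈ Finset.range n, w i)).Nonempty := by
    simp [Finset.image_nonempty, Finset.nonempty_range_iff, ht.ne']
  obtain ⟨M, hMmem⟩ : ∃ M, ((Finset.range t).image (fun n => ∑ i ∈ Finset.range n, w i)).min' hne = M :=
    ⟨_, rfl⟩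
  have hM_le : ∀ j < t, M ≤ ∑ i ∈ Finset.range j, w i := by
    intro j hj
    rw [← hMmem]
    exact Finset.min'_le _ _ (Finset.mem_image_of_mem _ (Finset.mem_range.mpr hj))
  obtain ⟨j₀, hj₀mem, hj₀⟩ := Finset.mem_image.mp (hMmem ▸ Finset.min'_mem _ hne)
  have hj₀t : j₀ < t := Finset.mem_range.mp hj₀mem
  have hcard : ((Finset.Ico (M - s) M)).card = s := by
    rw [Int.card_Ico]; omega
  refine le_trans ?_ hcard.le
  apply Finset.card_le_card_of_injOn (fun k => ∑ i ∈ Finset.range (k + t), w i)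
  · intro k hk
    simp only [Finset.mem_coe, Finset.mem_filter, Finset.mem_range] at hk
    obtain ⟨hkt, hgood⟩ := hk
    have hnm := newmin hper hb hs hsum hkt hgood
    have h1 := hnm j₀ (by omega)
    have h2 : ∑ i ∈ Finset.range (k + t), w i = (∑ i ∈ Finset.range k, w i) - s :=
      psum_shift hper hsum k
    have h3 := hM_le k hkt
    simp only [Finset.mem_coe, Finset.mem_Ico]
    omega
  · intro k hk k' hk' heq
    simp only [Finset.coe_filter, Set.mem_setOf_eq, Finset.mem_range] at hk hk'
    have heq' : ∑ i ∈ Finset.range (k + t), w i = ∑ i ∈ Finset.range (k' + t), w i := heq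
    by_contra hne'
    rcases lt_or_gt_of_ne hne' with h | h
    · have := newmin hper hb hs hsum hk'.1 hk'.2 (k + t) (by omega)
      omega
    · have := newmin hper hb hs hsum hk.1 hk.2 (k' + t) (by omega)
      omega

end SpitzerAux



section Main

variable {Ω : Type*} [MeasurableSpace Ω] {μ : Measure Ω} [IsProbabilityMeasure μ]

/-- The joint law of finitely many iid random variables is the product measure. -/
lemma map_fin_eq_pi (β : ℕ → Ω → ℤ) (hmeas : ∀ i, Measurable (β i))
    (hindep : iIndepFun β μ)
    (hident : ∀ i, IdentDistrib (β i) (β 0) μ μ) (t : ℕ) :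
    μ.map (fun ω (i : Fin t) => β i ω)
      = Measure.pi (fun _ : Fin t => μ.map (β 0)) := by
  classical
  have hX : Measurable (fun ω (i : Fin t) => β i ω) :=
    measurable_pi_lambda _ fun i => hmeas i
  symm
  apply Measure.pi_eq
  intro sets hsets
  rw [Measure.map_apply hX (MeasurableSet.univ_pi hsets)]
  set sets' : ℕ → Set ℤ := fun n => if h : n < t then sets ⟨n, h⟩ else Set.univ with hsets'
  have hpre : (fun ω (i : Fin t) => β i ω) ⁻¹' Set.pi Set.univ sets
      = ⋂ n ∈ Finset.range t, β n ⁻¹' sets' n := by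
    ext ω
    simp only [Set.mem_preimage, Set.mem_pi, Set.mem_univ, forall_true_left,
      Set.mem_iInter, Finset.mem_range, hsets']
    constructor
    · intro h n hn
      simp only [dif_pos hn]
      exact h ⟨n, hn⟩
    · intro h i
      have := h i.val i.isLt
      simpa [dif_pos i.isLt] using this
  rw [hpre, hindep.measure_inter_preimage_eq_mul (Finset.range t)
    (fun n _ => by
      by_cases h : n < t
      · simp only [hsets', dif_pos h]; exact .of_discrete
      · simp only [hsets', dif_neg h]; exact MeasurableSet.univ)]
  rw [← Fin.prod_univ_eq_prod_range (fun n => μ (β n ⁻¹' sets' n)) t]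
  apply Finset.prod_congr rfl
  intro i _
  have h1 : sets' i.val = sets i := by
    simp only [hsets', dif_pos i.isLt]
  rw [h1]
  have h2 : μ.map (β i.val) = μ.map (β 0) := (hident i.val).map_eq
  rw [← h2, Measure.map_apply (hmeas _) .of_discrete]

end Main

/-- A product measure with identical factors is invariant under rotation of coordinates. -/
lemma pi_map_rot {t : ℕ} [NeZero t] (ν : Measure ℤ) [IsProbabilityMeasure ν] (k : ℕ) :
    (Measure.pi (fun _ : Fin t => ν)).map
      (fun v : Fin t → ℤ => fun i => v ((k : Fin t) + i))
      = Measure.pi (fun _ : Fin t => ν) := by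
  set e : Fin t ≃ Fin t := Equiv.addLeft (k : Fin t) with he
  have hcoe : (fun v : Fin t → ℤ => fun i => v ((k : Fin t) + i))
      = ⇑(MeasurableEquiv.piCongrLeft (fun _ : Fin t => ℤ) e.symm) := by
    funext v
    funext i
    have := MeasurableEquiv.piCongrLeft_apply_apply (β := (fun _ : Fin t => ℤ)) e.symm v (e i)
    simp only [Equiv.symm_apply_apply] at this
    rw [this]
    simp [he, Equiv.addLeft]
  rw [hcoe]
  exact Measure.pi_map_piCongrLeft e.symm (fun _ : Fin t => ν)

/-- Spitzer-type bound for left-continuous random walks: if `(βᵢ)` are iid integer-valued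
random variables with `βᵢ ≥ -1`, `W_t = s + ∑_{i=1}^t βᵢ` with `s ≥ 1`, and
`τ = inf{t : W_t = 0}`, then `P(τ = t) ≤ (s/t)·P(W_t = 0)` for every `t ≥ 1`. -/
theorem hitting_time_le_spitzer
    {Ω : Type*} [MeasurableSpace Ω] {μ : Measure Ω} [IsProbabilityMeasure μ]
    (β : ℕ → Ω → ℤ) (hmeas : ∀ i, Measurable (β i))
    (hindep : iIndepFun β μ)
    (hident : ∀ i, IdentDistrib (β i) (β 0) μ μ)
    (hval : ∀ i, ∀ᵐ ω ∂μ, -1 ≤ β i ω)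
    (s : ℕ) (hs : 0 < s)
    (W : ℕ → Ω → ℤ) (hW : ∀ t ω, W t ω = (s : ℤ) + ∑ i ∈ Finset.range t, β i ω)
    (t : ℕ) (ht : 0 < t) :
    (μ {ω | W t ω = 0 ∧ ∀ u < t, W u ω ≠ 0}).toReal ≤
      ((s : ℝ) / t) * (μ {ω | W t ω = 0}).toReal := by
  classical
  haveI : NeZero t := ⟨ht.ne'⟩
  set X : Ω → (Fin t → ℤ) := fun ω i => β i ω with hXdef
  have hX : Measurable X := measurable_pi_lambda _ fun i => hmeas i
  set ν : Measure ℤ := μ.map (β 0) with hν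
  haveI : IsProbabilityMeasure ν := Measure.isProbabilityMeasure_map (hmeas 0).aemeasurable
  have hmap : μ.map X = Measure.pi (fun _ : Fin t => ν) :=
    map_fin_eq_pi β hmeas hindep hident t
  -- rotation event sets
  set Sk : ℕ → Set (Fin t → ℤ) := fun k =>
    {v | ((s : ℤ) + ∑ i ∈ Finset.range t, v (((k + i : ℕ)) : Fin t) = 0) ∧
      ∀ u < t, ((s : ℤ) + ∑ i ∈ Finset.range u, v (((k + i : ℕ)) : Fin t)) ≠ 0} with hSkdef
  have hSkmeas : ∀ k, MeasurableSet (Sk k) := by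
    intro k
    have h1 : ∀ u : ℕ, Measurable (fun v : Fin t → ℤ =>
        (s : ℤ) + ∑ i ∈ Finset.range u, v (((k + i : ℕ)) : Fin t)) := fun u =>
      measurable_const.add (Finset.measurable_sum _ fun i _ => measurable_pi_apply _)
    have : Sk k = ((fun v : Fin t → ℤ =>
          (s : ℤ) + ∑ i ∈ Finset.range t, v (((k + i : ℕ)) : Fin t)) ⁻¹' {0}) ∩
        (⋂ u, ⋂ (_ : u < t), ((fun v : Fin t → ℤ =>
          (s : ℤ) + ∑ i ∈ Finset.range u, v (((k + i : ℕ)) : Fin t)) ⁻¹' {0})ᶜ) := by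
      ext v
      simp [hSkdef, Set.mem_iInter]
    rw [this]
    exact ((h1 t) (measurableSet_singleton 0)).inter
      (MeasurableSet.iInter fun u => MeasurableSet.iInter fun _ =>
        ((h1 u) (measurableSet_singleton 0)).compl)
  have hrotmeas : ∀ k : ℕ,
      Measurable (fun v : Fin t → ℤ => fun i : Fin t => v ((k : Fin t) + i)) := fun k =>
    measurable_pi_lambda _ fun i => measurable_pi_apply _
  have hSk_pre : ∀ k : ℕ,
      Sk k = (fun v : Fin t → ℤ => fun i => v ((k : Fin t) + i)) ⁻¹' (Sk 0) := by
    intro k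
    ext v
    have hcast : ∀ i : ℕ, ((k : Fin t) + (((0 + i : ℕ)) : Fin t)) = (((k + i : ℕ)) : Fin t) := by
      intro i
      push_cast
      rw [Fin.ext_iff]; simp [Fin.val_add, Fin.val_natCast, Nat.add_mod]
    simp only [hSkdef, Set.mem_preimage, Set.mem_setOf_eq]
    constructor
    · rintro ⟨h1, h2⟩
      refine ⟨?_, ?_⟩
      · rw [Finset.sum_congr rfl fun i _ => congrArg v (hcast i)]; exact h1
      · intro u hu
        rw [Finset.sum_congr rfl fun i _ => congrArg v (hcast i)]; exact h2 u hu
    · rintro ⟨h1, h2⟩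
      refine ⟨?_, ?_⟩
      · rw [← Finset.sum_congr rfl fun i _ => congrArg v (hcast i)]; exact h1
      · intro u hu
        rw [← Finset.sum_congr rfl fun i _ => congrArg v (hcast i)]; exact h2 u hu
  have hμSk : ∀ k : ℕ, μ (X ⁻¹' Sk k) = μ (X ⁻¹' Sk 0) := by
    intro k
    rw [← Measure.map_apply hX (hSkmeas k), ← Measure.map_apply hX (hSkmeas 0)]
    rw [hSk_pre k, ← Measure.map_apply (hrotmeas k) (hSkmeas 0), hmap, pi_map_rot]
  -- identify the events
  have hXsum : ∀ (ω : Ω) (u : ℕ), u ≤ t →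
      ∑ i ∈ Finset.range u, X ω (((0 + i : ℕ)) : Fin t) = ∑ i ∈ Finset.range u, β i ω := by
    intro ω u hu
    refine Finset.sum_congr rfl fun i hi => ?_
    have hi' : i < t := lt_of_lt_of_le (Finset.mem_range.mp hi) hu
    simp only [hXdef, Nat.zero_add]
    congr 1
    simp [Fin.val_natCast, Nat.mod_eq_of_lt hi']
  have hA : {ω | W t ω = 0 ∧ ∀ u < t, W u ω ≠ 0} = X ⁻¹' (Sk 0) := by
    ext ω
    simp only [Set.mem_setOf_eq, Set.mem_preimage, hSkdef, hW]
    constructor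
    · rintro ⟨h1, h2⟩
      exact ⟨by rw [hXsum ω t le_rfl]; exact h1,
        fun u hu => by rw [hXsum ω u hu.le]; exact h2 u hu⟩
    · rintro ⟨h1, h2⟩
      exact ⟨by rw [← hXsum ω t le_rfl]; exact h1,
        fun u hu => by rw [← hXsum ω u hu.le]; exact h2 u hu⟩
  have hBmeas : MeasurableSet {ω | W t ω = 0} := by
    have : {ω | W t ω = 0}
        = (fun ω => (s : ℤ) + ∑ i ∈ Finset.range t, β i ω) ⁻¹' {0} := by
      ext ω; simp [hW]
    rw [this]
    exact (measurable_const.add (Finset.measurable_sum _ fun i _ => hmeas i))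
      (measurableSet_singleton 0)
  -- counting function
  set N : Ω → ℕ := fun ω => ((Finset.range t).filter (fun k => X ω ∈ Sk k)).card with hNdef
  have hsum_count : ∑ k ∈ Finset.range t, μ (X ⁻¹' Sk k) = ∫⁻ ω, (N ω : ENNReal) ∂μ := by
    have h1 : ∀ k ∈ Finset.range t, μ (X ⁻¹' Sk k)
        = ∫⁻ ω, (X ⁻¹' Sk k).indicator (1 : Ω → ENNReal) ω ∂μ := fun k _ =>
      (lintegral_indicator_one (hX (hSkmeas k))).symm
    have h2 := lintegral_finset_sum (μ := μ) (Finset.range t)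
      (f := fun k ω => (X ⁻¹' Sk k).indicator (1 : Ω → ENNReal) ω)
      (fun k _ => measurable_one.indicator (hX (hSkmeas k)))
    rw [Finset.sum_congr rfl h1, ← h2]
    congr 1
    funext ω
    rw [hNdef]
    simp only [Set.indicator_apply, Set.mem_preimage, Pi.one_apply]
    rw [Finset.sum_boole]
  -- a.e. bound via the cycle lemma
  have hae : ∀ᵐ ω ∂μ, ∀ n, -1 ≤ β n ω := ae_all_iff.mpr hval
  have hbound : ∀ᵐ ω ∂μ, (N ω : ENNReal)
      ≤ (s : ENNReal) * ({ω | W t ω = 0}).indicator (1 : Ω → ENNReal) ω := by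
    filter_upwards [hae] with ω hω
    set w : ℕ → ℤ := fun n => X ω ((n : ℕ) : Fin t) with hwdef
    have hper : ∀ n, w (n + t) = w n := by
      intro n
      simp only [hwdef]
      congr 1
      push_cast
      simp
    have hb : ∀ n, -1 ≤ w n := fun n => hω _
    by_cases hWt : W t ω = 0
    · rw [Set.indicator_of_mem (show ω ∈ {ω | W t ω = 0} from hWt) (1 : Ω → ENNReal),
        Pi.one_apply, mul_one]
      have hsum' : (s : ℤ) + ∑ i ∈ Finset.range t, w i = 0 := by
        have h0 : ∑ i ∈ Finset.range t, w i = ∑ i ∈ Finset.range t, β i ω := by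
          refine Finset.sum_congr rfl fun i hi => ?_
          have hi' : i < t := Finset.mem_range.mp hi
          simp only [hwdef, hXdef]
          congr 1
          simp [Fin.val_natCast, Nat.mod_eq_of_lt hi']
        rw [h0]
        rw [hW] at hWt
        exact hWt
      have hle := SpitzerAux.cycle_card_le hper hb hs ht hsum'
      have hsub : ((Finset.range t).filter (fun k => X ω ∈ Sk k))
          ⊆ (Finset.range t).filter
            (fun k => ∀ u < t, (s : ℤ) + ∑ i ∈ Finset.range u, w (k + i) ≠ 0) := by
        intro k hk
        simp only [Finset.mem_filter, hSkdef, Set.mem_setOf_eq] at hk ⊢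
        exact ⟨hk.1, hk.2.2⟩
      have := (Finset.card_le_card hsub).trans hle
      exact_mod_cast Nat.cast_le.mpr this
    · rw [Set.indicator_of_notMem (show ω ∉ {ω | W t ω = 0} from hWt) (1 : Ω → ENNReal),
        mul_zero]
      have hN0 : N ω = 0 := by
        rw [hNdef, Finset.card_eq_zero]
        rw [Finset.filter_eq_empty_iff]
        intro k _
        intro hkmem
        apply hWt
        have h1 : (s : ℤ) + ∑ i ∈ Finset.range t, w (k + i) = 0 := hkmem.1
        rw [SpitzerAux.sum_period_shift hper k] at h1
        have h0 : ∑ i ∈ Finset.range t, w i = ∑ i ∈ Finset.range t, β i ω := by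
          refine Finset.sum_congr rfl fun i hi => ?_
          have hi' : i < t := Finset.mem_range.mp hi
          simp only [hwdef, hXdef]
          congr 1
          simp [Fin.val_natCast, Nat.mod_eq_of_lt hi']
        rw [hW]
        rw [h0] at h1
        exact h1
      simp [hN0]
  -- combine
  have hfinal : (t : ENNReal) * μ (X ⁻¹' Sk 0) ≤ (s : ENNReal) * μ {ω | W t ω = 0} := by
    have h1 : ∑ k ∈ Finset.range t, μ (X ⁻¹' Sk k) = (t : ENNReal) * μ (X ⁻¹' Sk 0) := by
      rw [Finset.sum_congr rfl fun k _ => hμSk k, Finset.sum_const, Finset.card_range,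
        nsmul_eq_mul]
    rw [← h1, hsum_count]
    calc ∫⁻ ω, (N ω : ENNReal) ∂μ
        ≤ ∫⁻ ω, (s : ENNReal) * ({ω | W t ω = 0}).indicator (1 : Ω → ENNReal) ω ∂μ :=
          lintegral_mono_ae hbound
      _ = (s : ENNReal) * μ {ω | W t ω = 0} := by
          rw [lintegral_const_mul _ (measurable_one.indicator hBmeas),
            lintegral_indicator_one hBmeas]
  rw [hA]
  have hane : μ (X ⁻¹' Sk 0) ≠ ⊤ := measure_ne_top μ _
  have hbne : μ {ω | W t ω = 0} ≠ ⊤ := measure_ne_top μ _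
  have h2 : (t : ℝ) * (μ (X ⁻¹' Sk 0)).toReal ≤ (s : ℝ) * (μ {ω | W t ω = 0}).toReal := by
    have h3 := ENNReal.toReal_mono (by finiteness) hfinal
    rw [ENNReal.toReal_mul, ENNReal.toReal_mul, ENNReal.toReal_natCast, ENNReal.toReal_natCast] at h3
    exact h3
  rw [div_mul_eq_mul_div, le_div_iff₀ (by positivity : (0 : ℝ) < (t : ℝ))]
  linarith
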